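/- For every prime power q, every integer r ≥ 2 and every integer d ≥ 2 one has n_q(2,d,r) = d + ⌈d/q⌉; that is, the smallest length of a two-dimensional linear code over F_q with minimum Hamming distance at least d and locality r equals the Griesmer bound d + ⌈d/q⌉. -/

import Mathlib

open scoped Classical

/-- The Hamming weight of a vector: the number of nonzero coordinates. -/
noncomputable def hamWt {F : Type} [Field F] {n : ℕ} (c : Fin n → F) : ℕ :=
  (Finset.univ.filter fun i => c i ≠ 0).card

/-- `C` is a linear `[n,k,d]` code over `F`: a `k`-dimensional subspace of `F^n`
in which every nonzero codeword has Hamming weight at least `d`. -/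
def IsCode {F : Type} [Field F] {n : ℕ} (k d : ℕ) (C : Submodule F (Fin n → F)) : Prop :=
  Module.finrank F ↥C = k ∧ ∀ c ∈ C, c ≠ 0 → d ≤ hamWt c

/-- `C ⊆ F^n` has locality `r`: every coordinate `i` has a recovery set `S` of at most `r`
other coordinates such that any two codewords agreeing on `S` agree at `i`. -/
def HasLocality {F : Type} [Field F] {n : ℕ} (C : Submodule F (Fin n → F)) (r : ℕ) : Prop :=
  ∀ i : Fin n, ∃ S : Finset (Fin n), i ∉ S ∧ S.card ≤ r ∧
    ∀ c ∈ C, ∀ c' ∈ C, (∀ j ∈ S, c j = c' j) → c i = c' i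

/-- There exists a linear `[n,k,d]_q` code (over some field with `q` elements). -/
def CodeExists (q n k d : ℕ) : Prop :=
  ∃ (F : Type) (_ : Field F), Nat.card F = q ∧
    ∃ C : Submodule F (Fin n → F), IsCode k d C

/-- There exists a linear `[n,k,d]_q` code with locality `r`. -/
def LRCExists (q n k d r : ℕ) : Prop :=
  ∃ (F : Type) (_ : Field F), Nat.card F = q ∧
    ∃ C : Submodule F (Fin n → F), IsCode k d C ∧ HasLocality C r

/-- `n_q(k,d)`: the smallest length of a linear `[n,k,d]_q` code. -/
noncomputable def nCode (q k d : ℕ) : ℕ := sInf {n | CodeExists q n k d}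

/-- `n_q(k,d,r)`: the smallest length of a linear `[n,k,d]_q` code with locality `r`. -/
noncomputable def nLRC (q k d r : ℕ) : ℕ := sInf {n | LRCExists q n k d r}

/-- There exists an `[n,k]_q` code with locality `r` (no condition on minimum distance). -/
def LRCExistsNoDist (q n k r : ℕ) : Prop :=
  ∃ (F : Type) (_ : Field F), Nat.card F = q ∧
    ∃ C : Submodule F (Fin n → F), Module.finrank F ↥C = k ∧ HasLocality C r

/-- `n'_q(k,r)`: the smallest length of an `[n,k]_q` code with locality `r`. -/
noncomputable def nLRCNoDist (q k r : ℕ) : ℕ := sInf {n | LRCExistsNoDist q n k r}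

/-- The dual code of `C`. -/
def dualCode {F : Type} [Field F] {n : ℕ} (C : Submodule F (Fin n → F)) : Set (Fin n → F) :=
  {x | ∀ c ∈ C, ∑ j, x j * c j = 0}

/-- `C` is projective: non-degenerate and no two coordinates are proportional. -/
def IsProjective {F : Type} [Field F] {n : ℕ} (C : Submodule F (Fin n → F)) : Prop :=
  (∀ i : Fin n, ∃ c ∈ C, c i ≠ 0) ∧
    (∀ i j : Fin n, i ≠ j → ∀ lam : F, lam ≠ 0 → ∃ c ∈ C, c i ≠ lam * c j)

/-- The Griesmer bound `g_q(k,d) = ∑_{i=0}^{k-1} ⌈d/q^i⌉`. -/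
noncomputable def griesmer (q k d : ℕ) : ℕ :=
  ∑ i ∈ Finset.range k, ⌈(d : ℚ) / (q : ℚ) ^ i⌉₊



set_option synthInstance.maxHeartbeats 1000000
set_option maxHeartbeats 1000000

open Finset in
lemma per_coord {F : Type} [Field F] [Fintype F] {q : ℕ} (hF : Fintype.card F = q)
    (x y : F) :
    q - 1 ≤ ((Finset.univ.erase (0 : F × F)).filter
      (fun p : F × F => p.1 * x + p.2 * y = 0)).card := by
  have h0 : (Finset.univ.erase (0 : F)).card = q - 1 := by
    rw [Finset.card_erase_of_mem (mem_univ _), Finset.card_univ, hF]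
  rw [← h0]
  by_cases hy : y = 0
  · by_cases hx : x = 0
    · apply Finset.card_le_card_of_injOn (fun a => (a, 0))
      · intro a ha
        simp only [Finset.mem_coe, Finset.mem_erase, Finset.mem_univ, and_true] at ha
        simp [Finset.mem_filter, Finset.mem_erase, Prod.ext_iff, ha, hx, hy]
      · intro a _ b _ hab
        exact (Prod.ext_iff.mp hab).1
    · apply Finset.card_le_card_of_injOn (fun b => (0, b))
      · intro b hb
        simp only [Finset.mem_coe, Finset.mem_erase, Finset.mem_univ, and_true] at hb
        simp [Finset.mem_filter, Finset.mem_erase, Prod.ext_iff, hb, hy]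
      · intro a _ b _ hab
        exact (Prod.ext_iff.mp hab).2
  · apply Finset.card_le_card_of_injOn (fun a => (a, -(a * x / y)))
    · intro a ha
      simp only [Finset.mem_coe, Finset.mem_erase, Finset.mem_univ, and_true] at ha
      simp only [Finset.mem_coe, Finset.mem_filter, Finset.mem_erase, Finset.mem_univ, and_true]
      constructor
      · simp [Prod.ext_iff, ha]
      · field_simp
        ring
    · intro a _ b _ hab
      exact (Prod.ext_iff.mp hab).1


open Finset in
lemma lower_bound {F : Type} [Field F] [Fintype F] {q n d : ℕ}
    (hF : Fintype.card F = q) (hq : 2 ≤ q) (hd : 1 ≤ d)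
    (C : Submodule F (Fin n → F)) (hC : IsCode 2 d C) :
    d + ⌈(d : ℚ) / (q : ℚ)⌉₊ ≤ n := by
  -- basis
  haveI : FiniteDimensional F ↥C := inferInstance
  obtain ⟨c1, c2, hc1C, hc2C, hcomb⟩ :
      ∃ c1 c2 : Fin n → F, c1 ∈ C ∧ c2 ∈ C ∧
        ∀ a a' : F, a • c1 + a' • c2 = 0 → a = 0 ∧ a' = 0 := by
    let b : Module.Basis (Fin 2) F ↥C := Module.finBasisOfFinrankEq F ↥C hC.1
    have hli : LinearIndependent F (C.subtype ∘ b) :=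
      b.linearIndependent.map' C.subtype C.ker_subtype
    refine ⟨C.subtype (b 0), C.subtype (b 1), SetLike.coe_mem _, SetLike.coe_mem _, ?_⟩
    intro a a' h
    have := Fintype.linearIndependent_iff.mp hli ![a, a'] (by
      simpa [Fin.sum_univ_two] using h)
    exact ⟨this 0, this 1⟩
  set w : F × F → (Fin n → F) := fun p => p.1 • c1 + p.2 • c2 with hw
  have hwC : ∀ p : F × F, w p ∈ C := fun p =>
    C.add_mem (C.smul_mem _ hc1C) (C.smul_mem _ hc2C)
  set P : Finset (F × F) := Finset.univ.erase 0 with hP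
  have hwne : ∀ p ∈ P, w p ≠ 0 := by
    intro p hp h
    obtain ⟨h1, h2⟩ := hcomb p.1 p.2 h
    simp only [hP, Finset.mem_erase, Finset.mem_univ, and_true] at hp
    exact hp (Prod.ext h1 h2)
  have hwt : ∀ p ∈ P, d ≤ hamWt (w p) := fun p hp => hC.2 _ (hwC p) (hwne p hp)
  -- d ≤ n
  have hdn : d ≤ n := by
    have h1 : ((1 : F), (0 : F)) ∈ P := by
      simp [hP, Prod.ext_iff]
    calc d ≤ hamWt (w (1, 0)) := hwt _ h1
      _ ≤ n := by
        simpa [hamWt] using Finset.card_le_card (Finset.filter_subset _ (univ : Finset (Fin n)))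
  -- per-codeword zero counts
  have hZ : ∀ p ∈ P, (Finset.univ.filter fun i => w p i = 0).card ≤ n - d := by
    intro p hp
    have := Finset.card_filter_add_card_filter_not
      (s := (Finset.univ : Finset (Fin n))) (p := fun i => w p i = 0)
    have hwtp := hwt p hp
    have : (Finset.univ.filter fun i => w p i = 0).card + hamWt (w p) = n := by
      simpa [hamWt, Finset.card_univ] using this
    omega
  -- double counting
  have hdc : n * (q - 1) ≤ (q * q - 1) * (n - d) := by
    have hsum : ∑ p ∈ P, (Finset.univ.filter fun i => w p i = 0).card
        = ∑ i : Fin n, (P.filter fun p => w p i = 0).card := by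
      simp only [Finset.card_filter]
      exact Finset.sum_comm
    have hupper : ∑ p ∈ P, (Finset.univ.filter fun i => w p i = 0).card
        ≤ (q * q - 1) * (n - d) := by
      calc ∑ p ∈ P, (Finset.univ.filter fun i => w p i = 0).card
          ≤ ∑ _p ∈ P, (n - d) := Finset.sum_le_sum hZ
        _ = P.card * (n - d) := by rw [Finset.sum_const, smul_eq_mul]
        _ = (q * q - 1) * (n - d) := by
            congr 1
            rw [hP, Finset.card_erase_of_mem (mem_univ _), Finset.card_univ,
              Fintype.card_prod, hF]
    have hlowr : n * (q - 1) ≤ ∑ i : Fin n, (P.filter fun p => w p i = 0).card := by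
      calc n * (q - 1) = ∑ _i : Fin n, (q - 1) := by
            rw [Finset.sum_const, smul_eq_mul, Finset.card_univ, Fintype.card_fin]
        _ ≤ ∑ i : Fin n, (P.filter fun p => w p i = 0).card := by
            apply Finset.sum_le_sum
            intro i _
            have := per_coord hF (c1 i) (c2 i)
            have heq : (P.filter fun p => w p i = 0)
                = ((Finset.univ.erase (0 : F × F)).filter
                    (fun p : F × F => p.1 * c1 i + p.2 * c2 i = 0)) := by
              apply Finset.filter_congr
              intro p _
              simp [hw]
            rw [heq]
            exact this
    calc n * (q - 1) ≤ ∑ i : Fin n, (P.filter fun p => w p i = 0).card := hlowr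
      _ = ∑ p ∈ P, (Finset.univ.filter fun i => w p i = 0).card := hsum.symm
      _ ≤ (q * q - 1) * (n - d) := hupper
  -- final arithmetic
  obtain ⟨q', rfl⟩ : ∃ q', q = q' + 1 := ⟨q - 1, by omega⟩
  have hq' : 1 ≤ q' := by omega
  set m := n - d with hm
  have hqq : (q' + 1) * (q' + 1) - 1 = q' * (q' + 2) :=
    Nat.sub_eq_of_eq_add (by ring)
  rw [hqq] at hdc
  have hn2 : n ≤ (q' + 2) * m := by
    refine Nat.le_of_mul_le_mul_left ?_ (show 0 < q' by omega)
    calc q' * n = n * q' := by ring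
      _ ≤ q' * (q' + 2) * m := by simpa using hdc
      _ = q' * ((q' + 2) * m) := by ring
  have hnm : n = d + m := by omega
  have hdm : d ≤ (q' + 1) * m := by
    have ht : (q' + 2) * m = (q' + 1) * m + m := by ring
    omega
  have hceil : ⌈(d : ℚ) / ((q' + 1 : ℕ) : ℚ)⌉₊ ≤ m := by
    rw [Nat.ceil_le, div_le_iff₀ (by positivity)]
    have : (d : ℚ) ≤ ((q' + 1) * m : ℕ) := by exact_mod_cast hdm
    push_cast at this ⊢
    linarith
  omega

open Finset in
lemma card_div_class_le {n e t : ℕ} (he : 0 < e) :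
    (Finset.univ.filter fun i : Fin n => (i : ℕ) / e = t).card ≤ e := by
  have h := Finset.card_le_card_of_injOn
    (s := Finset.univ.filter fun i : Fin n => (i : ℕ) / e = t) (t := Finset.range e)
    (fun i : Fin n => (i : ℕ) % e)
    (by intro i _; simp only [Finset.mem_coe, Finset.mem_range]; exact Nat.mod_lt _ he)
    (by
      intro i hi j hj hij
      have hi' : (i : ℕ) / e = t := by simpa using hi
      have hj' : (j : ℕ) / e = t := by simpa using hj
      have hij' : (i : ℕ) % e = (j : ℕ) % e := hij
      apply Fin.ext
      rw [← Nat.div_add_mod (i : ℕ) e, ← Nat.div_add_mod (j : ℕ) e, hi', hj', hij'])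
  calc (Finset.univ.filter fun i : Fin n => (i : ℕ) / e = t).card
      ≤ (Finset.range e).card := h
    _ = e := Finset.card_range e


open Finset in
lemma upper_bound_field {F : Type} [Field F] [Fintype F] {q d r : ℕ}
    (hF : Fintype.card F = q) (hr : 2 ≤ r) (hd : 2 ≤ d) :
    ∃ C : Submodule F (Fin (d + ⌈(d : ℚ) / (q : ℚ)⌉₊) → F), IsCode 2 d C ∧ HasLocality C r := by
  have hq2 : 2 ≤ q := hF ▸ Fintype.one_lt_card
  set e : ℕ := ⌈(d : ℚ) / (q : ℚ)⌉₊ with hedef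
  set n : ℕ := d + e with hndef
  have hq0 : (0 : ℚ) < q := by positivity
  have he1 : 1 ≤ e := by
    rw [hedef]
    have : (0 : ℚ) < (d : ℚ) / q := by
      apply div_pos _ hq0
      exact_mod_cast (by omega : 0 < d)
    exact Nat.one_le_iff_ne_zero.mpr (by positivity)
  have hdqe : d ≤ q * e := by
    have h1 : (d : ℚ) / q ≤ e := Nat.le_ceil _
    have h2 : (d : ℚ) ≤ q * e := by
      rw [div_le_iff₀ hq0] at h1
      linarith
    exact_mod_cast h2
  have hed : e < d := by
    have h1 : (d : ℚ) / q ≤ ((d - 1 : ℕ) : ℚ) := by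
      rw [div_le_iff₀ hq0]
      have hq2' : (2 : ℚ) ≤ q := by exact_mod_cast hq2
      have hd2' : (2 : ℚ) ≤ d := by exact_mod_cast hd
      have : ((d - 1 : ℕ) : ℚ) = (d : ℚ) - 1 := by
        push_cast [Nat.cast_sub (by omega : 1 ≤ d)]
        ring
      rw [this]
      nlinarith
    have := Nat.ceil_le.mpr h1
    omega
  have he0 : 0 < e := he1
  -- class of a coordinate
  have hclass : ∀ i : Fin n, (i : ℕ) / e ≤ q := by
    intro i
    have h1 : (i : ℕ) < (q + 1) * e := by
      have : n ≤ (q + 1) * e := by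
        have : (q + 1) * e = q * e + e := by ring
        omega
      omega
    have := (Nat.div_lt_iff_lt_mul he0).mpr (by omega : (i : ℕ) < (q + 1) * e)
    omega
  -- the equivalence Fin q ≃ F
  let φ : Fin q ≃ F := (finCongr hF.symm).trans (Fintype.equivFin F).symm
  -- generator vectors
  let c1 : Fin n → F := fun i => if (i : ℕ) / e < q then 1 else 0
  let c2 : Fin n → F := fun i => if h : (i : ℕ) / e < q then φ ⟨(i : ℕ) / e, h⟩ else 1
  -- weight bound
  have hwt : ∀ a b : F, ¬(a = 0 ∧ b = 0) → d ≤ hamWt (a • c1 + b • c2) := by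
    intro a b hab
    set w : Fin n → F := a • c1 + b • c2 with hwdef
    have hweval : ∀ i : Fin n, w i = a * c1 i + b * c2 i := by
      intro i; simp [hwdef]
    obtain ⟨t₀, hsub⟩ : ∃ t₀ : ℕ, ∀ i : Fin n, w i = 0 → (i : ℕ) / e = t₀ := by
      by_cases hb : b = 0
      · have ha : a ≠ 0 := fun h => hab ⟨h, hb⟩
        refine ⟨q, fun i hi => ?_⟩
        by_contra hne
        have hlt : (i : ℕ) / e < q := lt_of_le_of_ne (hclass i) hne
        rw [hweval i] at hi
        simp only [c1, c2, if_pos hlt, dif_pos hlt, hb] at hi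
        simp at hi
        exact ha hi
      · refine ⟨(φ.symm (-a / b) : Fin q), fun i hi => ?_⟩
        rw [hweval i] at hi
        by_cases hlt : (i : ℕ) / e < q
        · simp only [c1, c2, if_pos hlt, dif_pos hlt] at hi
          have : φ ⟨(i : ℕ) / e, hlt⟩ = -a / b := by
            rw [eq_div_iff hb]
            linear_combination hi
          have := congrArg φ.symm this
          rw [Equiv.symm_apply_apply] at this
          exact congrArg Fin.val this
        · simp only [c1, c2, if_neg hlt, dif_neg hlt] at hi
          simp at hi
          exact absurd hi hb
    have hZ : (Finset.univ.filter fun i : Fin n => w i = 0).card ≤ e := by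
      calc (Finset.univ.filter fun i : Fin n => w i = 0).card
          ≤ (Finset.univ.filter fun i : Fin n => (i : ℕ) / e = t₀).card := by
            apply Finset.card_le_card
            intro i hi
            simp only [Finset.mem_filter, Finset.mem_univ, true_and] at hi ⊢
            exact hsub i hi
        _ ≤ e := card_div_class_le he0
    have hsplit := Finset.card_filter_add_card_filter_not
      (s := (Finset.univ : Finset (Fin n))) (p := fun i : Fin n => w i = 0)
    have : (Finset.univ.filter fun i : Fin n => w i = 0).card + hamWt w = n := by
      simpa [hamWt, Finset.card_univ] using hsplit
    omega
  -- linear independence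
  have hli : LinearIndependent F ![c1, c2] := by
    rw [LinearIndependent.pair_iff]
    intro s t hst
    by_contra hc
    have := hwt s t (by tauto)
    rw [hst] at this
    have hz : hamWt (0 : Fin n → F) = 0 := by simp [hamWt]
    omega
  -- the code
  refine ⟨Submodule.span F {c1, c2}, ⟨?_, ?_⟩, ?_⟩
  · -- finrank
    have hrange : Set.range ![c1, c2] = {c1, c2} := by
      ext v
      constructor
      · rintro ⟨j, rfl⟩
        fin_cases j <;> simp
      · rintro (rfl | rfl)
        · exact ⟨0, rfl⟩
        · exact ⟨1, rfl⟩
    have := finrank_span_eq_card hli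
    rw [hrange] at this
    simpa using this
  · -- min distance
    intro c hc hc0
    obtain ⟨a, b, rfl⟩ := Submodule.mem_span_pair.mp hc
    apply hwt
    rintro ⟨rfl, rfl⟩
    simp at hc0
  · -- locality
    -- special coordinates
    have h0n : 0 < n := by omega
    have hen : e < n := by omega
    have h2en : 2 * e < n := by omega
    set j₀ : Fin n := ⟨0, h0n⟩ with hj₀
    set j₁ : Fin n := ⟨e, hen⟩ with hj₁
    set j₂ : Fin n := ⟨2 * e, h2en⟩ with hj₂
    have hd₀ : (j₀ : ℕ) / e = 0 := by simp [hj₀, Nat.zero_div]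
    have hd₁ : (j₁ : ℕ) / e = 1 := by simp [hj₁, Nat.div_self he0]
    have hd₂ : (j₂ : ℕ) / e = 2 := by
      simp only [hj₂]
      exact Nat.mul_div_cancel 2 he0
    -- determinant-based recovery
    have hdet : ∀ j k : Fin n, c1 j * c2 k - c1 k * c2 j ≠ 0 →
        ∀ x ∈ Submodule.span F {c1, c2}, x j = 0 → x k = 0 → x = 0 := by
      intro j k hD x hx hxj hxk
      obtain ⟨a, b, rfl⟩ := Submodule.mem_span_pair.mp hx
      have e1 : a * c1 j + b * c2 j = 0 := by simpa using hxj
      have e2 : a * c1 k + b * c2 k = 0 := by simpa using hxk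
      have ha : a * (c1 j * c2 k - c1 k * c2 j) = 0 := by
        linear_combination c2 k * e1 - c2 j * e2
      have hb : b * (c1 j * c2 k - c1 k * c2 j) = 0 := by
        linear_combination c1 j * e2 - c1 k * e1
      have ha0 : a = 0 := by
        rcases mul_eq_zero.mp ha with h | h
        · exact h
        · exact absurd h hD
      have hb0 : b = 0 := by
        rcases mul_eq_zero.mp hb with h | h
        · exact h
        · exact absurd h hD
      simp [ha0, hb0]
    -- column values
    have h0q : 0 < q := by omega
    have h1q : 1 < q := hq2
    have hc1j₀ : c1 j₀ = 1 := by simp [c1, hd₀, h0q]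
    have hc1j₁ : c1 j₁ = 1 := by simp [c1, hd₁, h1q]
    have hc2j₀ : c2 j₀ = φ ⟨0, h0q⟩ := by simp [c2, hd₀, h0q]
    have hc2j₁ : c2 j₁ = φ ⟨1, h1q⟩ := by simp [c2, hd₁, h1q]
    have hφne : ∀ s t : Fin q, s ≠ t → φ s ≠ φ t := fun s t hst h => hst (φ.injective h)
    have hD01 : c1 j₀ * c2 j₁ - c1 j₁ * c2 j₀ ≠ 0 := by
      rw [hc1j₀, hc1j₁, hc2j₀, hc2j₁]
      simp only [one_mul]
      exact sub_ne_zero.mpr (hφne _ _ (by simp))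
    have hD02 : c1 j₀ * c2 j₂ - c1 j₂ * c2 j₀ ≠ 0 := by
      by_cases h2q : 2 < q
      · have hc1j₂ : c1 j₂ = 1 := by simp [c1, hd₂, h2q]
        have hc2j₂ : c2 j₂ = φ ⟨2, h2q⟩ := by simp [c2, hd₂, h2q]
        rw [hc1j₀, hc1j₂, hc2j₀, hc2j₂]
        simp only [one_mul]
        exact sub_ne_zero.mpr (hφne _ _ (by simp))
      · have h2q' : ¬ ((j₂ : ℕ) / e < q) := by omega
        have hc1j₂ : c1 j₂ = 0 := by simp [c1, h2q']
        have hc2j₂ : c2 j₂ = 1 := by simp [c2, h2q']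
        rw [hc1j₀, hc1j₂, hc2j₂]
        simp
    have hD12 : c1 j₁ * c2 j₂ - c1 j₂ * c2 j₁ ≠ 0 := by
      by_cases h2q : 2 < q
      · have hc1j₂ : c1 j₂ = 1 := by simp [c1, hd₂, h2q]
        have hc2j₂ : c2 j₂ = φ ⟨2, h2q⟩ := by simp [c2, hd₂, h2q]
        rw [hc1j₁, hc1j₂, hc2j₁, hc2j₂]
        simp only [one_mul]
        exact sub_ne_zero.mpr (hφne _ _ (by simp))
      · have h2q' : ¬ ((j₂ : ℕ) / e < q) := by omega
        have hc1j₂ : c1 j₂ = 0 := by simp [c1, h2q']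
        have hc2j₂ : c2 j₂ = 1 := by simp [c2, h2q']
        rw [hc1j₁, hc1j₂, hc2j₂]
        simp
    -- distinctness
    have hne01 : j₀ ≠ j₁ := by simp [hj₀, hj₁, Fin.ext_iff]; omega
    have hne02 : j₀ ≠ j₂ := by simp [hj₀, hj₂, Fin.ext_iff]; omega
    have hne12 : j₁ ≠ j₂ := by simp [hj₁, hj₂, Fin.ext_iff]; omega
    -- the locality recovery for a pair
    have hrec : ∀ j k : Fin n, c1 j * c2 k - c1 k * c2 j ≠ 0 →
        ∀ c ∈ Submodule.span F {c1, c2}, ∀ c' ∈ Submodule.span F {c1, c2},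
          c j = c' j → c k = c' k → c = c' := by
      intro j k hD c hc c' hc' hj hk
      have hx : c - c' ∈ Submodule.span F {c1, c2} := Submodule.sub_mem _ hc hc'
      have := hdet j k hD (c - c') hx (by simp [hj]) (by simp [hk])
      have := sub_eq_zero.mp this
      exact this
    intro i
    by_cases hi0 : i = j₀
    · refine ⟨{j₁, j₂}, ?_, ?_, ?_⟩
      · simp [hi0, hne01, hne02]
      · calc ({j₁, j₂} : Finset (Fin n)).card ≤ 2 := Finset.card_insert_le _ _ |>.trans (by simp)
          _ ≤ r := hr
      · intro c hc c' hc' hagree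
        have := hrec j₁ j₂ hD12 c hc c' hc' (hagree j₁ (by simp)) (hagree j₂ (by simp))
        rw [this]
    · by_cases hi1 : i = j₁
      · refine ⟨{j₀, j₂}, ?_, ?_, ?_⟩
        · simp [hi1, hne01.symm, hne12]
        · calc ({j₀, j₂} : Finset (Fin n)).card ≤ 2 := Finset.card_insert_le _ _ |>.trans (by simp)
            _ ≤ r := hr
        · intro c hc c' hc' hagree
          have := hrec j₀ j₂ hD02 c hc c' hc' (hagree j₀ (by simp)) (hagree j₂ (by simp))
          rw [this]
      · refine ⟨{j₀, j₁}, ?_, ?_, ?_⟩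
        · simp [hi0, hi1]
        · calc ({j₀, j₁} : Finset (Fin n)).card ≤ 2 := Finset.card_insert_le _ _ |>.trans (by simp)
            _ ≤ r := hr
        · intro c hc c' hc' hagree
          have := hrec j₀ j₁ hD01 c hc c' hc' (hagree j₀ (by simp)) (hagree j₁ (by simp))
          rw [this]


theorem n_dim2_r_ge_2 (q d r : ℕ) (hq : IsPrimePow q) (hr : 2 ≤ r) (hd : 2 ≤ d) :
    nLRC q 2 d r = d + ⌈(d : ℚ) / (q : ℚ)⌉₊ := by
  have hq2 : 2 ≤ q := hq.two_le
  have hmem : LRCExists q (d + ⌈(d : ℚ) / (q : ℚ)⌉₊) 2 d r := by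
    obtain ⟨p, k, hp, hk, rfl⟩ := hq
    haveI : Fact p.Prime := ⟨hp.nat_prime⟩
    have hcard : Nat.card (GaloisField p k) = p ^ k := GaloisField.card p k hk.ne'
    haveI : Finite (GaloisField p k) := Nat.finite_of_card_ne_zero (by
      rw [hcard]; positivity)
    haveI : Fintype (GaloisField p k) := Fintype.ofFinite _
    have hFcard : Fintype.card (GaloisField p k) = p ^ k := by
      rw [← Nat.card_eq_fintype_card, hcard]
    obtain ⟨C, hC, hL⟩ := upper_bound_field hFcard hr hd
    exact ⟨GaloisField p k, inferInstance, hcard, C, hC, hL⟩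
  have hlb : ∀ m ∈ {n | LRCExists q n 2 d r}, d + ⌈(d : ℚ) / (q : ℚ)⌉₊ ≤ m := by
    rintro m ⟨F, hField, hcard, C, hC, -⟩
    haveI : Finite F := Nat.finite_of_card_ne_zero (by omega)
    haveI : Fintype F := Fintype.ofFinite F
    have hFcard : Fintype.card F = q := by rw [← Nat.card_eq_fintype_card]; exact hcard
    exact lower_bound hFcard hq2 (by omega) C hC
  show sInf {n | LRCExists q n 2 d r} = d + ⌈(d : ℚ) / (q : ℚ)⌉₊
  exact le_antisymm (Nat.sInf_le hmem) (le_csInf ⟨_, hmem⟩ hlb)
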